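/- arXiv:1507.00613 — 2 statements merged into one kernel-verified Lean document; each statement's English description precedes it below -/
import Mathlib

section
/- Let (X,·,d) be a group which is complete and metric invariant, with identity element e. Then (Lip¹₊(X), ⊕), the set of nonnegative 1-Lipschitz real functions with the inf-convolution, is a monoid with identity element γ(e) = d(e,·), and a function f ∈ Lip¹₊(X) is invertible in this monoid (i.e. there exists g ∈ Lip¹₊(X) with f ⊕ g = g ⊕ f = γ(e)) if and only if f = d(a,·) for some a ∈ X. -/
/-- The inf-convolution of two real-valued functions on a group:
`(f ⊕ g)(x) = inf { f y + g z : y * z = x }`. -/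
noncomputable def infConv {X : Type*} [Mul X] (f g : X → ℝ) : X → ℝ :=
  fun x => sInf {r : ℝ | ∃ y z : X, y * z = x ∧ r = f y + g z}

/-- The set `Lip¹₊(X)` of nonnegative 1-Lipschitz real-valued functions. -/
def LipOnePos (X : Type*) [MetricSpace X] : Set (X → ℝ) :=
  {f | (∀ x, 0 ≤ f x) ∧ ∀ x y, |f x - f y| ≤ dist x y}

section Helpers
variable {X : Type*} [Group X] [MetricSpace X]

lemma infConv_le {f g : X → ℝ} (hf : ∀ t, 0 ≤ f t) (hg : ∀ t, 0 ≤ g t)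
    {x y z : X} (h : y * z = x) : infConv f g x ≤ f y + g z := by
  apply csInf_le
  · refine ⟨0, ?_⟩
    rintro r ⟨y, z, -, rfl⟩
    exact add_nonneg (hf y) (hg z)
  · exact ⟨y, z, h, rfl⟩

lemma le_infConv {f g : X → ℝ} {x : X} {c : ℝ}
    (h : ∀ y z : X, y * z = x → c ≤ f y + g z) : c ≤ infConv f g x := by
  refine le_csInf ⟨f x + g 1, x, 1, mul_one x, rfl⟩ ?_
  rintro r ⟨y, z, hyz, rfl⟩
  exact h y z hyz

lemma infConv_nonneg {f g : X → ℝ} (hf : ∀ t, 0 ≤ f t) (hg : ∀ t, 0 ≤ g t) (x : X) :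
    0 ≤ infConv f g x :=
  le_infConv fun y z _ => add_nonneg (hf y) (hg z)

lemma infConv_mem (hleft : ∀ x y z : X, dist (x * y) (x * z) = dist y z)
    {f g : X → ℝ} (hf : f ∈ LipOnePos X) (hg : g ∈ LipOnePos X) :
    infConv f g ∈ LipOnePos X := by
  obtain ⟨hf0, hf1⟩ := hf
  obtain ⟨hg0, hg1⟩ := hg
  refine ⟨infConv_nonneg hf0 hg0, ?_⟩
  have key : ∀ x x' : X, infConv f g x - dist x x' ≤ infConv f g x' := by
    intro x x'
    apply le_infConv
    intro y z hyz
    set u := x'⁻¹ * x with hu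
    have hmul : y * (z * u) = x := by rw [hu, ← mul_assoc, hyz]; group
    have h1 : infConv f g x ≤ f y + g (z * u) := infConv_le hf0 hg0 hmul
    have h2 : g (z * u) - g z ≤ dist (z * u) z :=
      (abs_le.mp (hg1 (z * u) z)).2
    have h3 : dist (z * u) z = dist x x' := by
      have e1 := hleft z u 1
      rw [mul_one] at e1
      have e2 := hleft x'⁻¹ x x'
      rw [inv_mul_cancel] at e2
      rw [e1, hu, e2]
    linarith
  intro x y
  rw [abs_sub_le_iff]
  constructor
  · have := key x y; linarith
  · have := key y x; rw [dist_comm] at this; linarith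

lemma infConv_assoc {f g h : X → ℝ}
    (hf0 : ∀ t, 0 ≤ f t) (hg0 : ∀ t, 0 ≤ g t) (hh0 : ∀ t, 0 ≤ h t) :
    infConv (infConv f g) h = infConv f (infConv g h) := by
  have hfg0 := infConv_nonneg hf0 hg0
  have hgh0 := infConv_nonneg hg0 hh0
  funext x
  apply le_antisymm
  · apply le_infConv
    intro y u hyu
    rw [← sub_le_iff_le_add']
    apply le_infConv
    intro z w hzw
    have hmul : (y * z) * w = x := by rw [mul_assoc, hzw, hyu]
    have h1 : infConv (infConv f g) h x ≤ infConv f g (y * z) + h w :=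
      infConv_le hfg0 hh0 hmul
    have h2 : infConv f g (y * z) ≤ f y + g z := infConv_le hf0 hg0 rfl
    linarith
  · apply le_infConv
    intro u w huw
    rw [← sub_le_iff_le_add]
    apply le_infConv
    intro y z hyz
    have hmul : y * (z * w) = x := by rw [← mul_assoc, hyz, huw]
    have h1 : infConv f (infConv g h) x ≤ f y + infConv g h (z * w) :=
      infConv_le hf0 hgh0 hmul
    have h2 : infConv g h (z * w) ≤ g z + h w := infConv_le hg0 hh0 rfl
    linarith


variable (hleft : ∀ x y z : X, dist (x * y) (x * z) = dist y z)
variable (hright : ∀ x y z : X, dist (y * x) (z * x) = dist y z)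

lemma gamma_mem : (fun x => dist (1 : X) x) ∈ LipOnePos X := by
  refine ⟨fun x => dist_nonneg, fun x y => ?_⟩
  simp only [dist_comm (1:X)]
  exact abs_dist_sub_le x y 1

include hleft hright in
lemma infConv_id {f : X → ℝ} (hf : f ∈ LipOnePos X) :
    infConv (fun x => dist (1 : X) x) f = f ∧ infConv f (fun x => dist (1 : X) x) = f := by
  obtain ⟨hf0, hf1⟩ := hf
  constructor
  · funext x
    apply le_antisymm
    · have := infConv_le (f := fun x => dist (1:X) x) (g := f)
        (fun t => dist_nonneg) hf0 (one_mul x)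
      simpa using this
    · apply le_infConv
      intro y z hyz
      have h1 : f x - f z ≤ dist x z := (abs_le.mp (hf1 x z)).2
      have h2 : dist x z = dist (1:X) y := by
        rw [← hyz]
        have := hright z y 1
        rw [one_mul] at this
        rw [this, dist_comm]
      linarith
  · funext x
    apply le_antisymm
    · have := infConv_le (f := f) (g := fun x => dist (1:X) x)
        hf0 (fun t => dist_nonneg) (mul_one x)
      simpa using this
    · apply le_infConv
      intro y z hyz
      have h1 : f x - f y ≤ dist x y := (abs_le.mp (hf1 x y)).2
      have h2 : dist x y = dist (1:X) z := by
        rw [← hyz]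
        have := hleft y z 1
        rw [mul_one] at this
        rw [this, dist_comm]
      linarith

include hleft hright in
lemma dist_unit (a : X) :
    infConv (fun x => dist a x) (fun x => dist a⁻¹ x) = (fun x => dist (1 : X) x) := by
  funext x
  apply le_antisymm
  · have hmul : a * (a⁻¹ * x) = x := by group
    have := infConv_le (f := fun x => dist a x) (g := fun x => dist a⁻¹ x)
      (fun t => dist_nonneg) (fun t => dist_nonneg) hmul
    have e1 : dist a⁻¹ (a⁻¹ * x) = dist (1:X) x := by
      have := hleft a⁻¹ 1 x
      rw [mul_one] at this
      rw [← this]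
    simp only [dist_self, e1, zero_add] at this
    exact this
  · apply le_infConv
    intro y z hyz
    have e1 : dist a⁻¹ z = dist (1:X) (a * z) := by
      have := hleft a a⁻¹ z
      rw [mul_inv_cancel] at this
      rw [this]
    have e2 : dist a y = dist (a * z) (y * z) := (hright z a y).symm
    calc dist (1:X) x = dist (1:X) (y * z) := by rw [hyz]
      _ ≤ dist (1:X) (a * z) + dist (a * z) (y * z) := dist_triangle _ _ _
      _ = dist a y + dist a⁻¹ z := by rw [← e1, ← e2]; ring

include hleft hright in
lemma dist_unit' (a : X) :
    infConv (fun x => dist a⁻¹ x) (fun x => dist a x) = (fun x => dist (1 : X) x) := by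
  funext x
  apply le_antisymm
  · have hmul : a⁻¹ * (a * x) = x := by group
    have := infConv_le (f := fun x => dist a⁻¹ x) (g := fun x => dist a x)
      (fun t => dist_nonneg) (fun t => dist_nonneg) hmul
    have e1 : dist a (a * x) = dist (1:X) x := by
      have := hleft a 1 x
      rw [mul_one] at this
      rw [← this]
    simp only [dist_self, e1, zero_add] at this
    exact this
  · apply le_infConv
    intro y z hyz
    have e1 : dist a⁻¹ y = dist (1:X) (y * a) := by
      have := hright a a⁻¹ y
      rw [inv_mul_cancel] at this
      rw [this]
    have e2 : dist a z = dist (y * a) (y * z) := (hleft y a z).symm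
    calc dist (1:X) x = dist (1:X) (y * z) := by rw [hyz]
      _ ≤ dist (1:X) (y * a) + dist (y * a) (y * z) := dist_triangle _ _ _
      _ = dist a⁻¹ y + dist a z := by rw [← e1, ← e2]

include hleft in
lemma units_hard [CompleteSpace X] {f g : X → ℝ}
    (hf : f ∈ LipOnePos X) (hg : g ∈ LipOnePos X)
    (hfg : infConv f g = (fun x => dist (1 : X) x))
    (hgf : infConv g f = (fun x => dist (1 : X) x)) :
    ∃ a : X, f = fun x => dist a x := by
  obtain ⟨hf0, hf1⟩ := hf
  obtain ⟨hg0, hg1⟩ := hg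
  -- choose approximate minimizers at 1
  have key : ∀ n : ℕ, ∃ y : X, f y + g y⁻¹ < 1 / (n + 1) := by
    intro n
    have h0 : infConv f g 1 = 0 := by rw [hfg]; simp
    have hne : {r : ℝ | ∃ y z : X, y * z = (1:X) ∧ r = f y + g z}.Nonempty :=
      ⟨f 1 + g 1, 1, 1, mul_one 1, rfl⟩
    have hlt : sInf {r : ℝ | ∃ y z : X, y * z = (1:X) ∧ r = f y + g z} < 1 / (n + 1) := by
      have : (0:ℝ) < 1 / (n + 1) := by positivity
      rw [show sInf {r : ℝ | ∃ y z : X, y * z = (1:X) ∧ r = f y + g z} = infConv f g 1 from rfl, h0]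
      exact this
    obtain ⟨r, ⟨y, z, hyz, rfl⟩, hr⟩ := exists_lt_of_csInf_lt hne hlt
    refine ⟨y, ?_⟩
    have hz : z = y⁻¹ := by
      rw [← inv_eq_of_mul_eq_one_right hyz]
    rwa [hz] at hr
  choose a ha using key
  have hfa : ∀ n : ℕ, f (a n) < 1 / (n + 1) := fun n => by
    have := hg0 (a n)⁻¹; have := ha n; linarith
  have hga : ∀ n : ℕ, g ((a n)⁻¹) < 1 / (n + 1) := fun n => by
    have := hf0 (a n); have := ha n; linarith
  -- distance bound via g ⊕ f
  have hdist : ∀ n m : ℕ, dist (a n) (a m) ≤ 1 / (n + 1) + 1 / (m + 1) := by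
    intro n m
    have hmul : (a n)⁻¹ * (a m) = (a n)⁻¹ * (a m) := rfl
    have h1 : infConv g f ((a n)⁻¹ * a m) ≤ g ((a n)⁻¹) + f (a m) :=
      infConv_le hg0 hf0 rfl
    rw [hgf] at h1
    simp only at h1
    have h2 : dist (1:X) ((a n)⁻¹ * a m) = dist (a n) (a m) := by
      have := hleft (a n) 1 ((a n)⁻¹ * a m)
      rw [mul_one] at this
      rw [← this]
      congr 1
      group
    rw [h2] at h1
    have := hga n; have := hfa m
    linarith
  -- a is Cauchy
  have hb : Filter.Tendsto (fun N : ℕ => 2 / ((N:ℝ) + 1)) Filter.atTop (nhds 0) := by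
    have : Filter.Tendsto (fun n : ℕ => 1 / ((n:ℝ) + 1)) Filter.atTop (nhds 0) :=
      tendsto_one_div_add_atTop_nhds_zero_nat
    have h2 := this.const_mul (2:ℝ)
    rw [mul_zero] at h2
    convert h2 using 2 with N
    ring
  have hcauchy : CauchySeq a := by
    apply cauchySeq_of_le_tendsto_0 (fun N : ℕ => 2 / ((N:ℝ) + 1)) _ hb
    intro n m N hn hm
    have h1 : (1:ℝ) / (n + 1) ≤ 1 / (N + 1) := by
      apply one_div_le_one_div_of_le (by positivity)
      have : (N:ℝ) ≤ n := Nat.cast_le.mpr hn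
      linarith
    have h2 : (1:ℝ) / (m + 1) ≤ 1 / (N + 1) := by
      apply one_div_le_one_div_of_le (by positivity)
      have : (N:ℝ) ≤ m := Nat.cast_le.mpr hm
      linarith
    have := hdist n m
    have hh : dist (a n) (a m) ≤ 1 / (N+1) + 1 / (N+1) := by linarith
    have he : (2:ℝ) / ((N:ℝ)+1) = 1/(N+1) + 1/(N+1) := by ring
    linarith [hh, he]
  obtain ⟨A, hA⟩ := cauchySeq_tendsto_of_complete hcauchy
  have hdA : Filter.Tendsto (fun n => dist (a n) A) Filter.atTop (nhds 0) :=
    tendsto_iff_dist_tendsto_zero.mp hA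
  have h1n : Filter.Tendsto (fun n : ℕ => 1 / ((n:ℝ) + 1)) Filter.atTop (nhds 0) :=
    tendsto_one_div_add_atTop_nhds_zero_nat
  have hsum : Filter.Tendsto (fun n : ℕ => 1 / ((n:ℝ) + 1) + dist (a n) A)
      Filter.atTop (nhds 0) := by
    have := h1n.add hdA
    rwa [add_zero] at this
  refine ⟨A, funext fun x => ?_⟩
  apply le_antisymm
  · -- f x ≤ dist A x
    have : f x - dist A x ≤ 0 := by
      apply ge_of_tendsto' hsum
      intro n
      have h1 : f x - f (a n) ≤ dist x (a n) := (abs_le.mp (hf1 x (a n))).2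
      have h2 : dist x (a n) ≤ dist x A + dist A (a n) := dist_triangle _ _ _
      have h3 := hfa n
      rw [dist_comm x A, dist_comm A (a n)] at h2
      have := hf0 (a n)
      linarith
    linarith
  · -- dist A x ≤ f x
    have : dist A x - f x ≤ 0 := by
      apply ge_of_tendsto' hsum
      intro n
      have h1 : infConv g f ((a n)⁻¹ * x) ≤ g ((a n)⁻¹) + f x := infConv_le hg0 hf0 rfl
      rw [hgf] at h1
      simp only at h1
      have h2 : dist (1:X) ((a n)⁻¹ * x) = dist (a n) x := by
        have := hleft (a n) 1 ((a n)⁻¹ * x)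
        rw [mul_one] at this
        rw [← this]
        congr 1
        group
      rw [h2] at h1
      have h3 : dist A x ≤ dist A (a n) + dist (a n) x := dist_triangle _ _ _
      have := hga n
      rw [dist_comm A (a n)] at h3
      linarith
    linarith

end Helpers

/-- on a complete metric invariant group, `(Lip¹₊(X), ⊕)` is a monoid with
identity `γ(1) = d(1,·)`, and `f ∈ Lip¹₊(X)` is invertible in this monoid iff
`f = d(a,·)` for some `a ∈ X`. -/
theorem lipOnePos_monoid_units {X : Type*} [Group X] [MetricSpace X] [CompleteSpace X]
    (hleft : ∀ x y z : X, dist (x * y) (x * z) = dist y z)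
    (hright : ∀ x y z : X, dist (y * x) (z * x) = dist y z) :
    (∀ f ∈ LipOnePos X, ∀ g ∈ LipOnePos X, infConv f g ∈ LipOnePos X) ∧
    (∀ f ∈ LipOnePos X, ∀ g ∈ LipOnePos X, ∀ h ∈ LipOnePos X,
       infConv (infConv f g) h = infConv f (infConv g h)) ∧
    (∀ f ∈ LipOnePos X,
       infConv (fun x => dist (1 : X) x) f = f ∧ infConv f (fun x => dist (1 : X) x) = f) ∧
    (∀ f ∈ LipOnePos X,
       (∃ g ∈ LipOnePos X, infConv f g = (fun x => dist (1 : X) x) ∧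
          infConv g f = (fun x => dist (1 : X) x)) ↔
       ∃ a : X, f = fun x => dist a x) := by
  refine ⟨fun f hf g hg => infConv_mem hleft hf hg,
    fun f hf g hg h hh => infConv_assoc hf.1 hg.1 hh.1,
    fun f hf => infConv_id hleft hright hf,
    fun f hf => ⟨?_, ?_⟩⟩
  · rintro ⟨g, hg, hfg, hgf⟩
    exact units_hard hleft hf hg hfg hgf
  · rintro ⟨a, rfl⟩
    refine ⟨fun x => dist a⁻¹ x, ⟨fun x => dist_nonneg, fun x y => ?_⟩,
      dist_unit hleft hright a, dist_unit' hleft hright a⟩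
    simp only [dist_comm a⁻¹]
    exact abs_dist_sub_le x y a⁻¹
end

section
/- Let (X,·,d) be a group which is metric invariant. Then for every Katetov map f ∈ 𝒦(X) and all a,b ∈ X, f(a·b) = inf { φ(a) + ψ(b) : φ, ψ ∈ 𝒦(X), φ ⊕ ψ = f }. -/
/-- A Katetov map: `|f x − f y| ≤ d(x,y) ≤ f x + f y` for all `x, y`. -/
def IsKatetov {X : Type*} [MetricSpace X] (f : X → ℝ) : Prop :=
  ∀ x y : X, |f x - f y| ≤ dist x y ∧ dist x y ≤ f x + f y

lemma IsKatetov.nonneg {X : Type*} [MetricSpace X] {f : X → ℝ} (hf : IsKatetov f) (x : X) :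
    0 ≤ f x := by
  have := (hf x x).2
  simp at this
  linarith

/-- on a metric invariant group, every Katetov map `f` satisfies
`f(a·b) = inf { φ(a) + ψ(b) : φ, ψ ∈ 𝒦(X), φ ⊕ ψ = f }` for all `a, b ∈ X`. -/
theorem katetov_value_eq_sInf_decompositions {X : Type*} [Group X] [MetricSpace X]
    (hleft : ∀ x y z : X, dist (x * y) (x * z) = dist y z)
    (hright : ∀ x y z : X, dist (y * x) (z * x) = dist y z)
    (f : X → ℝ) (hf : IsKatetov f) (a b : X) :
    f (a * b) = sInf {r : ℝ | ∃ φ ψ : X → ℝ,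
      IsKatetov φ ∧ IsKatetov ψ ∧ infConv φ ψ = f ∧ r = φ a + ψ b} := by
  set φ₀ : X → ℝ := fun x => f (x * b) with hφ₀
  set ψ₀ : X → ℝ := fun z => dist z b with hψ₀
  have hφK : IsKatetov φ₀ := by
    intro x y
    constructor
    · have := (hf (x * b) (y * b)).1
      rwa [hright b x y] at this
    · have := (hf (x * b) (y * b)).2
      rwa [hright b x y] at this
  have hψK : IsKatetov ψ₀ := by
    intro x y
    refine ⟨abs_dist_sub_le x y b, ?_⟩
    calc dist x y ≤ dist x b + dist b y := dist_triangle x b y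
      _ = dist x b + dist y b := by rw [dist_comm b y]
  have hconv : infConv φ₀ ψ₀ = f := by
    funext x
    apply le_antisymm
    · apply csInf_le
      · refine ⟨0, ?_⟩
        rintro r ⟨y, z, _, rfl⟩
        have := hf.nonneg (y * b)
        have := dist_nonneg (x := z) (y := b)
        simp only [hφ₀, hψ₀]
        positivity
      · exact ⟨x * b⁻¹, b, by group, by simp [hφ₀, hψ₀]⟩
    · refine le_csInf ⟨f x, x * b⁻¹, b, by group, by simp [hφ₀, hψ₀]⟩ ?_
      rintro r ⟨y, z, rfl, rfl⟩
      have h1 := (hf (y * z) (y * b)).1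
      rw [hleft y z b] at h1
      have := abs_le.1 h1
      simp only [hφ₀, hψ₀]
      linarith [this.1]
  apply le_antisymm
  · refine le_csInf ⟨φ₀ a + ψ₀ b, φ₀, ψ₀, hφK, hψK, hconv, rfl⟩ ?_
    rintro r ⟨φ, ψ, hφ, hψ, hc, rfl⟩
    have : infConv φ ψ (a * b) = f (a * b) := by rw [hc]
    rw [← this]
    apply csInf_le
    · refine ⟨0, ?_⟩
      rintro r ⟨y, z, _, rfl⟩
      have := hφ.nonneg y
      have := hψ.nonneg z
      linarith
    · exact ⟨a, b, rfl, rfl⟩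
  · apply csInf_le
    · refine ⟨0, ?_⟩
      rintro r ⟨φ, ψ, hφ, hψ, _, rfl⟩
      have := hφ.nonneg a
      have := hψ.nonneg b
      linarith
    · exact ⟨φ₀, ψ₀, hφK, hψK, hconv, by simp [hφ₀, hψ₀]⟩
end
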